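/- Lower bound for state conversion with standard oracles: let q, n ∈ ℕ, D ⊆ {1,…,q}^n a finite set, X = ℂ^{q+1} with orthonormal basis e₀, e₁, …, e_q, and Z a finite-dimensional complex inner product space. For each x ∈ D and j ∈ {1,…,n}, let O_{x,j} be a unitary on X with O_{x,j} e₀ = e_{x_j}, and assume that O_{x,j} depends only on x_j (that is, x_j = y_j implies O_{x,j} = O_{y,j}). Let O_x = ⊕_{j=1}^n O_{x,j} be the block-diagonal unitary on ℂ^n ⊗ X, and let ρ_x, σ_x be unit vectors in Z. Then γ₂((⟨ρ_x,ρ_y⟩ − ⟨σ_x,σ_y⟩)_{x,y∈D} | (O_x − O_y)_{x,y∈D}) ≥ (1/2) · γ₂((⟨ρ_x,ρ_y⟩ − ⟨σ_x,σ_y⟩)_{x,y∈D} | (D_{xy})_{x,y∈D}), where D_{xy} is the n × n diagonal matrix (a linear map ℂ^n → ℂ^n) whose j-th diagonal entry is 1 if x_j ≠ y_j and 0 if x_j = y_j. -/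

import Mathlib

noncomputable section

open scoped ENNReal ComplexOrder

set_option maxHeartbeats 1000000

/-- A linear endomorphism of a finite-dimensional complex inner ℂ product space is unitary. -/
def IsUnitaryMap {E : Type*} [NormedAddCommGroup E] [InnerProductSpace ℂ E]
    [FiniteDimensional ℂ E] (f : E →ₗ[ℂ] E) : Prop :=
  LinearMap.adjoint f ∘ₗ f = LinearMap.id ∧ f ∘ₗ LinearMap.adjoint f = LinearMap.id

/-- Operator norm of a linear map between finite-dimensional inner ℂ product spaces. -/
noncomputable def opNorm {E F : Type*} [NormedAddCommGroup E] [InnerProductSpace ℂ E]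
    [NormedAddCommGroup F] [InnerProductSpace ℂ F] [FiniteDimensional ℂ E]
    (f : E →ₗ[ℂ] F) : ℝ :=
  ‖LinearMap.toContinuousLinearMap f‖

/-- A complex scalar viewed as a linear map `ℂ → ℂ`. -/
noncomputable def scalarMap (c : ℂ) : ℂ →ₗ[ℂ] ℂ := c • LinearMap.id

/-- The block-diagonal map `⊕ᵢ Δᵢ` on an `ℓ²`-direct sum of copies of a space. -/
noncomputable def piBlock {ι : Type*} [Fintype ι] {X₁ X₂ : Type*}
    [NormedAddCommGroup X₁] [InnerProductSpace ℂ X₁]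
    [NormedAddCommGroup X₂] [InnerProductSpace ℂ X₂]
    (Δ : ι → (X₂ →ₗ[ℂ] X₁)) :
    PiLp 2 (fun _ : ι => X₂) →ₗ[ℂ] PiLp 2 (fun _ : ι => X₁) :=
  (WithLp.linearEquiv 2 ℂ (∀ _ : ι, X₁)).symm.toLinearMap ∘ₗ
    (LinearMap.pi fun i => Δ i ∘ₗ LinearMap.proj i) ∘ₗ
      (WithLp.linearEquiv 2 ℂ (∀ _ : ι, X₂)).toLinearMap

/-- The relative `γ₂`-norm `γ₂(A | Δ)` of a family `A = (A_{xy} : Z₂ → Z₁)` relative to a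
family `Δ = (Δ_{xy} : X₂ → X₁)`: the infimum over `k ∈ ℕ` and factorizations
`A_{xy} = Υ_x* ∘ (Δ_{xy} ⊗ id_{ℂᵏ}) ∘ Φ_y` of `max (max_x ‖Υ_x‖²) (max_y ‖Φ_y‖²)`,
where `X ⊗ ℂᵏ` is realized as the `ℓ²`-direct sum of `k` copies of `X`.
The infimum of the empty set is `+∞`. -/
noncomputable def relGamma2 {D₁ D₂ : Type*} [Fintype D₁] [Fintype D₂]
    {X₁ X₂ Z₁ Z₂ : Type*}
    [NormedAddCommGroup X₁] [InnerProductSpace ℂ X₁] [FiniteDimensional ℂ X₁]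
    [NormedAddCommGroup X₂] [InnerProductSpace ℂ X₂] [FiniteDimensional ℂ X₂]
    [NormedAddCommGroup Z₁] [InnerProductSpace ℂ Z₁] [FiniteDimensional ℂ Z₁]
    [NormedAddCommGroup Z₂] [InnerProductSpace ℂ Z₂] [FiniteDimensional ℂ Z₂]
    (A : D₁ → D₂ → (Z₂ →ₗ[ℂ] Z₁)) (Δ : D₁ → D₂ → (X₂ →ₗ[ℂ] X₁)) : ℝ≥0∞ :=
  ⨅ (k : ℕ) (Υ : D₁ → (Z₁ →ₗ[ℂ] PiLp 2 (fun _ : Fin k => X₁)))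
    (Φ : D₂ → (Z₂ →ₗ[ℂ] PiLp 2 (fun _ : Fin k => X₂)))
    (_ : ∀ x y, A x y =
      LinearMap.adjoint (Υ x) ∘ₗ piBlock (fun _ : Fin k => Δ x y) ∘ₗ Φ y),
    (⨆ x, ENNReal.ofReal (opNorm (Υ x) ^ 2)) ⊔ (⨆ y, ENNReal.ofReal (opNorm (Φ y) ^ 2))


lemma piBlock_apply {ι : Type*} [Fintype ι] {X₁ X₂ : Type*}
    [NormedAddCommGroup X₁] [InnerProductSpace ℂ X₁]
    [NormedAddCommGroup X₂] [InnerProductSpace ℂ X₂]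
    (Δ : ι → (X₂ →ₗ[ℂ] X₁)) (v : PiLp 2 (fun _ : ι => X₂)) (i : ι) :
    piBlock Δ v i = Δ i (v i) := rfl

def idxEquiv (q k : ℕ) : (Fin k × (Fin 2 × Fin (q + 1))) ≃ Fin (k * (2 * (q + 1))) :=
  ((Equiv.refl (Fin k)).prodCongr finProdFinEquiv).trans finProdFinEquiv

variable {q n k : ℕ}

noncomputable def Tmap (q n k : ℕ)
    (F G : Fin n → (EuclideanSpace ℂ (Fin (q + 1)) →ₗ[ℂ] EuclideanSpace ℂ (Fin (q + 1)))) :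
    PiLp 2 (fun _ : Fin k => PiLp 2 (fun _ : Fin n => EuclideanSpace ℂ (Fin (q + 1)))) →ₗ[ℂ]
      PiLp 2 (fun _ : Fin (k * (2 * (q + 1))) => PiLp 2 (fun _ : Fin n => ℂ)) where
  toFun w := WithLp.toLp 2 fun m => WithLp.toLp 2 fun j =>
    if ((idxEquiv q k).symm m).2.1 = 0
    then F j (w ((idxEquiv q k).symm m).1 j) (((idxEquiv q k).symm m).2.2)
    else G j (w ((idxEquiv q k).symm m).1 j) (((idxEquiv q k).symm m).2.2)
  map_add' w w' := by
    ext m j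
    simp only [PiLp.add_apply, PiLp.toLp_apply, map_add]
    split <;> rename_i h <;> simp [h]
  map_smul' c w := by
    ext m j
    simp only [PiLp.smul_apply, PiLp.toLp_apply, map_smul]
    split <;> rename_i h <;> simp [h]

lemma Tmap_apply (F G : Fin n → (EuclideanSpace ℂ (Fin (q + 1)) →ₗ[ℂ] EuclideanSpace ℂ (Fin (q + 1))))
    (w) (κ : Fin k) (b : Fin 2) (a : Fin (q + 1)) (j : Fin n) :
    Tmap q n k F G w (idxEquiv q k (κ, b, a)) j
      = if b = 0 then F j (w κ j) a else G j (w κ j) a := by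
  simp only [Tmap, LinearMap.coe_mk, AddHom.coe_mk, PiLp.toLp_apply]
  rw [Equiv.symm_apply_apply]

lemma Tmap_norm_le
    (F G : Fin n → (EuclideanSpace ℂ (Fin (q + 1)) →ₗ[ℂ] EuclideanSpace ℂ (Fin (q + 1))))
    (hF : ∀ j v, ‖F j v‖ = ‖v‖) (hG : ∀ j v, ‖G j v‖ = ‖v‖)
    (w : PiLp 2 (fun _ : Fin k => PiLp 2 (fun _ : Fin n => EuclideanSpace ℂ (Fin (q + 1))))) :
    ‖Tmap q n k F G w‖ ≤ Real.sqrt 2 * ‖w‖ := by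
  have key : ∀ (H : Fin n → (EuclideanSpace ℂ (Fin (q + 1)) →ₗ[ℂ] EuclideanSpace ℂ (Fin (q + 1)))),
      (∀ j v, ‖H j v‖ = ‖v‖) → ∀ κ : Fin k,
      ∑ a : Fin (q + 1), ∑ j : Fin n, ‖H j (w κ j) a‖ ^ 2 = ∑ j : Fin n, ‖w κ j‖ ^ 2 := by
    intro H hH κ
    rw [Finset.sum_comm]
    exact Finset.sum_congr rfl fun j _ => by rw [← PiLp.norm_sq_eq_of_L2, hH]
  have hsq : ‖Tmap q n k F G w‖ ^ 2 = 2 * ‖w‖ ^ 2 := by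
    rw [PiLp.norm_sq_eq_of_L2, ← Equiv.sum_comp (idxEquiv q k)
      (fun m => ‖Tmap q n k F G w m‖ ^ 2)]
    simp only [Fintype.sum_prod_type, PiLp.norm_sq_eq_of_L2, Tmap_apply, Fin.sum_univ_two]
    have h0 : ((0 : Fin 2) = 0) = True := by simp
    have h1 : ((1 : Fin 2) = 0) = False := by simp [Fin.ext_iff]
    simp only [h0, h1, if_true, if_false]
    rw [Finset.mul_sum]
    refine Finset.sum_congr rfl fun κ _ => ?_
    rw [key F hF κ, key G hG κ, ← two_mul]
    congr 1
    exact Finset.sum_congr rfl fun j _ => PiLp.norm_sq_eq_of_L2 _ _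
  have h2 : ‖Tmap q n k F G w‖ ^ 2 ≤ (Real.sqrt 2 * ‖w‖) ^ 2 := by
    rw [hsq, mul_pow, Real.sq_sqrt (by norm_num : (0:ℝ) ≤ 2)]
  have hb : (0:ℝ) ≤ Real.sqrt 2 * ‖w‖ := by positivity
  nlinarith [norm_nonneg (Tmap q n k F G w)]

lemma scalarMap_apply (c z : ℂ) : scalarMap c z = c * z := rfl

lemma middle_eq
    (F G F' G' : Fin n → (EuclideanSpace ℂ (Fin (q + 1)) →ₗ[ℂ] EuclideanSpace ℂ (Fin (q + 1))))
    (d : Fin n → ℂ)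
    (N : PiLp 2 (fun _ : Fin n => EuclideanSpace ℂ (Fin (q + 1))) →ₗ[ℂ]
      PiLp 2 (fun _ : Fin n => EuclideanSpace ℂ (Fin (q + 1))))
    (h : ∀ (u w : PiLp 2 (fun _ : Fin n => EuclideanSpace ℂ (Fin (q + 1)))),
      ∑ j : Fin n, d j * ((inner ℂ (F j (u j)) (F' j (w j)) : ℂ)
        + (inner ℂ (G j (u j)) (G' j (w j)) : ℂ)) = (inner ℂ u (N w) : ℂ)) :
    LinearMap.adjoint (Tmap q n k F G) ∘ₗ
        piBlock (fun _ : Fin (k * (2 * (q + 1))) => piBlock (fun j => scalarMap (d j))) ∘ₗ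
        Tmap q n k F' G'
      = piBlock (fun _ : Fin k => N) := by
  apply LinearMap.ext; intro w
  refine ext_inner_left ℂ fun u => ?_
  rw [LinearMap.comp_apply, LinearMap.comp_apply, LinearMap.adjoint_inner_right]
  rw [PiLp.inner_apply, PiLp.inner_apply]
  rw [← Equiv.sum_comp (idxEquiv q k)]
  have h0 : ((0 : Fin 2) = 0) = True := by simp
  have h1 : ((1 : Fin 2) = 0) = False := by simp [Fin.ext_iff]
  simp only [Fintype.sum_prod_type, Fin.sum_univ_two, piBlock_apply, Tmap_apply,
    scalarMap_apply, h0, h1, if_true, if_false, PiLp.inner_apply, RCLike.inner_apply]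
  refine Finset.sum_congr rfl fun κ _ => ?_
  have hrhs : ∑ j : Fin n, ∑ a : Fin (q + 1),
      N (w κ) j a * (starRingEnd ℂ) (u κ j a) = (inner ℂ (u κ) (N (w κ)) : ℂ) := by
    simp [PiLp.inner_apply, RCLike.inner_apply]
  rw [hrhs, ← h (u κ) (w κ)]
  simp only [PiLp.inner_apply, RCLike.inner_apply]
  rw [Finset.sum_comm (f := fun a j => d j * F' j (w κ j) a * (starRingEnd ℂ) (F j (u κ j) a)),
    Finset.sum_comm (f := fun a j => d j * G' j (w κ j) a * (starRingEnd ℂ) (G j (u κ j) a)),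
    ← Finset.sum_add_distrib]
  refine Finset.sum_congr rfl fun j _ => ?_
  rw [mul_add, Finset.mul_sum, Finset.mul_sum]
  congr 1 <;> exact Finset.sum_congr rfl fun a _ => by ring

lemma norm_unitary_apply {E : Type*} [NormedAddCommGroup E] [InnerProductSpace ℂ E]
    [FiniteDimensional ℂ E] {f : E →ₗ[ℂ] E} (hf : IsUnitaryMap f) (v : E) : ‖f v‖ = ‖v‖ := by
  have h2 : (inner ℂ (f v) (f v) : ℂ) = inner ℂ v v := by
    have h3 : (LinearMap.adjoint f) (f v) = v := LinearMap.congr_fun hf.1 v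
    rw [← LinearMap.adjoint_inner_right f v (f v), h3]
  rw [norm_eq_sqrt_re_inner (𝕜 := ℂ), norm_eq_sqrt_re_inner (𝕜 := ℂ) v, h2]

lemma norm_unitary_adjoint_apply {E : Type*} [NormedAddCommGroup E] [InnerProductSpace ℂ E]
    [FiniteDimensional ℂ E] {f : E →ₗ[ℂ] E} (hf : IsUnitaryMap f) (v : E) :
    ‖LinearMap.adjoint f v‖ = ‖v‖ := by
  have h2 : (inner ℂ (LinearMap.adjoint f v) (LinearMap.adjoint f v) : ℂ) = inner ℂ v v := by
    have h3 : f ((LinearMap.adjoint f) v) = v := LinearMap.congr_fun hf.2 v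
    rw [LinearMap.adjoint_inner_left f (LinearMap.adjoint f v) v, h3]
  rw [norm_eq_sqrt_re_inner (𝕜 := ℂ), norm_eq_sqrt_re_inner (𝕜 := ℂ) v, h2]

lemma opNorm_comp_le {E F Zs : Type*} [NormedAddCommGroup E] [InnerProductSpace ℂ E]
    [NormedAddCommGroup F] [InnerProductSpace ℂ F]
    [NormedAddCommGroup Zs] [InnerProductSpace ℂ Zs]
    [FiniteDimensional ℂ E] [FiniteDimensional ℂ Zs]
    (f : E →ₗ[ℂ] F) (g : Zs →ₗ[ℂ] E) (c : ℝ) (hc : 0 ≤ c)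
    (hf : ∀ v, ‖f v‖ ≤ c * ‖v‖) : opNorm (f ∘ₗ g) ≤ c * opNorm g := by
  have hg : (0:ℝ) ≤ opNorm g := norm_nonneg _
  refine ContinuousLinearMap.opNorm_le_bound _ (by positivity) fun v => ?_
  have h1 : LinearMap.toContinuousLinearMap (f ∘ₗ g) v = f (g v) := rfl
  rw [h1]
  calc ‖f (g v)‖ ≤ c * ‖g v‖ := hf _
    _ ≤ c * (opNorm g * ‖v‖) := by
        have h2 := (LinearMap.toContinuousLinearMap g).le_opNorm v
        exact mul_le_mul_of_nonneg_left (by exact h2) hc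
    _ = c * opNorm g * ‖v‖ := by ring

/-- Lower bound for state conversion with standard oracles: for a set
`D` of strings over the alphabet `{1,…,q}` (realized as `Fin q`) of length `n`, standard
block-diagonal oracles `O_x = ⊕_j O_{x,j}` on `ℂⁿ ⊗ ℂ^{q+1}` with `O_{x,j} e₀ = e_{x_j}`
and `O_{x,j}` depending only on `x_j`, we have
`γ₂(⟨ρ_x,ρ_y⟩ − ⟨σ_x,σ_y⟩ | O_x − O_y) ≥
 (1/2) γ₂(⟨ρ_x,ρ_y⟩ − ⟨σ_x,σ_y⟩ | ⊕_j 1_{x_j ≠ y_j})`. -/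
theorem statement15 (q n : ℕ) (D : Finset (Fin n → Fin q)) {Z : Type}
    [NormedAddCommGroup Z] [InnerProductSpace ℂ Z] [FiniteDimensional ℂ Z]
    (O : {s // s ∈ D} → Fin n →
      (EuclideanSpace ℂ (Fin (q + 1)) →ₗ[ℂ] EuclideanSpace ℂ (Fin (q + 1))))
    (hO : ∀ x j, IsUnitaryMap (O x j))
    (hgen : ∀ x j, O x j (EuclideanSpace.single 0 1) =
      EuclideanSpace.single (Fin.succ (x.1 j)) 1)
    (hdep : ∀ x y j, x.1 j = y.1 j → O x j = O y j)
    (ρ σ : {s // s ∈ D} → Z) (hρ : ∀ x, ‖ρ x‖ = 1) (hσ : ∀ x, ‖σ x‖ = 1) :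
    (1 / 2 : ℝ≥0∞) *
        relGamma2
          (fun x y => scalarMap ((inner ℂ (ρ x) (ρ y) : ℂ) - (inner ℂ (σ x) (σ y) : ℂ)))
          (fun x y => piBlock (fun j => scalarMap (if x.1 j = y.1 j then 0 else 1))) ≤
      relGamma2
        (fun x y => scalarMap ((inner ℂ (ρ x) (ρ y) : ℂ) - (inner ℂ (σ x) (σ y) : ℂ)))
        (fun x y => piBlock (O x) - piBlock (O y)) := by
  classical
  refine le_iInf fun k => le_iInf fun Υ => le_iInf fun Φ => le_iInf fun hfac => ?_
  set Tx : {s // s ∈ D} → _ := fun x =>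
    Tmap q n k (fun j => LinearMap.adjoint (O x j)) (fun _ => -LinearMap.id) with hTx
  set Ty : {s // s ∈ D} → _ := fun y =>
    Tmap q n k (fun _ => LinearMap.id) (fun j => O y j) with hTy
  have hmid : ∀ x y, LinearMap.adjoint (Tx x) ∘ₗ
      piBlock (fun _ : Fin (k * (2 * (q + 1))) =>
        piBlock (fun j => scalarMap (if x.1 j = y.1 j then 0 else 1))) ∘ₗ Ty y
      = piBlock (fun _ : Fin k => piBlock (O x) - piBlock (O y)) := by
    intro x y
    refine middle_eq _ _ _ _ _ _ fun u w => ?_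
    rw [PiLp.inner_apply]
    refine Finset.sum_congr rfl fun j _ => ?_
    have hsub : ((piBlock (O x) - piBlock (O y)) w) j
        = O x j (w j) - O y j (w j) := rfl
    rw [hsub, inner_sub_right, LinearMap.adjoint_inner_left]
    simp only [LinearMap.neg_apply, LinearMap.id_coe, id_eq, inner_neg_left]
    by_cases hxy : x.1 j = y.1 j
    · rw [hdep x y j hxy]
      simp [hxy]
    · simp only [hxy, if_false]
      ring
  set Υ' := fun x => Tx x ∘ₗ Υ x with hΥ'
  set Φ' := fun y => Ty y ∘ₗ Φ y with hΦ'
  have hfac' : ∀ x y,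
      scalarMap ((inner ℂ (ρ x) (ρ y) : ℂ) - (inner ℂ (σ x) (σ y) : ℂ)) =
        LinearMap.adjoint (Υ' x) ∘ₗ
          piBlock (fun _ : Fin (k * (2 * (q + 1))) =>
            piBlock (fun j => scalarMap (if x.1 j = y.1 j then 0 else 1))) ∘ₗ Φ' y := by
    intro x y
    refine (hfac x y).trans ?_
    rw [hΥ', hΦ', LinearMap.adjoint_comp, ← hmid x y]
    rfl
  have hγ : relGamma2
      (fun x y => scalarMap ((inner ℂ (ρ x) (ρ y) : ℂ) - (inner ℂ (σ x) (σ y) : ℂ)))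
      (fun x y => piBlock fun j => scalarMap (if x.1 j = y.1 j then 0 else 1)) ≤
      (⨆ x, ENNReal.ofReal (opNorm (Υ' x) ^ 2)) ⊔
      (⨆ y, ENNReal.ofReal (opNorm (Φ' y) ^ 2)) :=
    iInf_le_of_le (k * (2 * (q + 1))) (iInf_le_of_le Υ' (iInf_le_of_le Φ'
      (iInf_le_of_le hfac' le_rfl)))
  set val := (⨆ x, ENNReal.ofReal (opNorm (Υ x) ^ 2)) ⊔
      (⨆ y, ENNReal.ofReal (opNorm (Φ y) ^ 2)) with hval
  have hbound : ∀ (W : {s // s ∈ D} → (ℂ →ₗ[ℂ]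
        PiLp 2 (fun _ : Fin k => PiLp 2 (fun _ : Fin n => EuclideanSpace ℂ (Fin (q + 1))))))
      (T : {s // s ∈ D} →
        (PiLp 2 (fun _ : Fin k => PiLp 2 (fun _ : Fin n => EuclideanSpace ℂ (Fin (q + 1)))) →ₗ[ℂ]
          PiLp 2 (fun _ : Fin (k * (2 * (q + 1))) => PiLp 2 (fun _ : Fin n => ℂ))))
      (x : {s // s ∈ D}),
      (∀ v, ‖T x v‖ ≤ Real.sqrt 2 * ‖v‖) →
      ENNReal.ofReal (opNorm (T x ∘ₗ W x) ^ 2) ≤ 2 * ENNReal.ofReal (opNorm (W x) ^ 2) := by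
    intro W T x hT
    have h1 : opNorm (T x ∘ₗ W x) ≤ Real.sqrt 2 * opNorm (W x) :=
      opNorm_comp_le _ _ _ (Real.sqrt_nonneg 2) hT
    have h0 : (0:ℝ) ≤ opNorm (T x ∘ₗ W x) := norm_nonneg _
    have h2 : opNorm (T x ∘ₗ W x) ^ 2 ≤ 2 * opNorm (W x) ^ 2 := by
      calc opNorm (T x ∘ₗ W x) ^ 2 ≤ (Real.sqrt 2 * opNorm (W x)) ^ 2 :=
            pow_le_pow_left₀ h0 h1 2
        _ = 2 * opNorm (W x) ^ 2 := by
            rw [mul_pow, Real.sq_sqrt (by norm_num : (0:ℝ) ≤ 2)]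
    calc ENNReal.ofReal (opNorm (T x ∘ₗ W x) ^ 2)
        ≤ ENNReal.ofReal (2 * opNorm (W x) ^ 2) := ENNReal.ofReal_le_ofReal h2
      _ = 2 * ENNReal.ofReal (opNorm (W x) ^ 2) := by
          rw [ENNReal.ofReal_mul (by norm_num : (0:ℝ) ≤ 2)]
          norm_num
  have hb : (⨆ x, ENNReal.ofReal (opNorm (Υ' x) ^ 2)) ⊔
      (⨆ y, ENNReal.ofReal (opNorm (Φ' y) ^ 2)) ≤ 2 * val := by
    refine sup_le (iSup_le fun x => ?_) (iSup_le fun y => ?_)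
    · refine le_trans (hbound Υ Tx x fun v => Tmap_norm_le _ _
        (fun j w => norm_unitary_adjoint_apply (hO x j) w)
        (fun j w => by simp) v) ?_
      exact mul_le_mul_right (le_trans
        (le_iSup (fun x => ENNReal.ofReal (opNorm (Υ x) ^ 2)) x) le_sup_left) (2:ℝ≥0∞)
    · refine le_trans (hbound Φ Ty y fun v => Tmap_norm_le _ _
        (fun j w => by simp)
        (fun j w => norm_unitary_apply (hO y j) w) v) ?_
      exact mul_le_mul_right (le_trans
        (le_iSup (fun y => ENNReal.ofReal (opNorm (Φ y) ^ 2)) y) le_sup_right) (2:ℝ≥0∞)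
  calc (1 / 2 : ℝ≥0∞) * relGamma2
        (fun x y => scalarMap ((inner ℂ (ρ x) (ρ y) : ℂ) - (inner ℂ (σ x) (σ y) : ℂ)))
        (fun x y => piBlock fun j => scalarMap (if x.1 j = y.1 j then 0 else 1))
      ≤ (1 / 2 : ℝ≥0∞) * (2 * val) := mul_le_mul_right (hγ.trans hb) _
    _ = val := by
        rw [← mul_assoc, one_div, ENNReal.inv_mul_cancel two_ne_zero ENNReal.ofNat_ne_top,
          one_mul]


end
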